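/- arXiv:0808.1299 — 4 statements merged into one kernel-verified Lean document; each statement's English description precedes it below -/
import Mathlib

section
/- Let f, g be continuous functions on [0,∞) with f(0) = g(0), and suppose h(t) := f(t) − g(t) is non-negative and non-decreasing. Then Γ(f)(t) ≥ Γ(g)(t) for all t ≥ 0. -/
open Set

/-- The reflection (Skorokhod) map:
`Γ(f)(t) = f(t) + sup_{s ∈ [0,t]} (−f(s))⁺`. -/
noncomputable def reflMap (f : ℝ → ℝ) (t : ℝ) : ℝ :=
  f t + sSup ((fun s => max (-f s) 0) '' Icc 0 t)

/-- Monotonicity of the reflection map: if `f(0) = g(0)` and `f − g` is non-negative and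
non-decreasing on `[0,∞)`, then `Γ(f) ≥ Γ(g)` on `[0,∞)`. -/
theorem reflMap_mono (f g : ℝ → ℝ) (hf : Continuous f) (hg : Continuous g)
    (h0 : f 0 = g 0)
    (hnonneg : ∀ t : ℝ, 0 ≤ t → 0 ≤ f t - g t)
    (hmono : ∀ s t : ℝ, 0 ≤ s → s ≤ t → f s - g s ≤ f t - g t) :
    ∀ t : ℝ, 0 ≤ t → reflMap g t ≤ reflMap f t := by
  intro t ht
  have hbdd : BddAbove ((fun s => max (-f s) 0) '' Icc 0 t) :=
    (isCompact_Icc.bddAbove_image ((hf.neg.max continuous_const).continuousOn))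
  set M := sSup ((fun s => max (-f s) 0) '' Icc 0 t) with hM
  have hMem0 : max (-f 0) 0 ∈ (fun s => max (-f s) 0) '' Icc 0 t :=
    ⟨0, ⟨le_refl 0, ht⟩, rfl⟩
  have hM0 : 0 ≤ M := le_trans (le_max_right _ _) (le_csSup hbdd hMem0)
  have key : sSup ((fun s => max (-g s) 0) '' Icc 0 t) ≤ M + (f t - g t) := by
    apply Real.sSup_le
    · rintro x ⟨s, hs, rfl⟩
      have h1 : max (-g s) 0 ≤ max (-f s) 0 + (f s - g s) := by
        have hfg := hnonneg s hs.1
        rcases le_total (-g s) 0 with h | h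
        · simp [max_eq_right h]
          positivity
        · calc max (-g s) 0 = -g s := max_eq_left h
            _ = -f s + (f s - g s) := by ring
            _ ≤ max (-f s) 0 + (f s - g s) := by
                exact add_le_add (le_max_left _ _) (le_refl _)
      calc max (-g s) 0 ≤ max (-f s) 0 + (f s - g s) := h1
        _ ≤ M + (f t - g t) :=
          add_le_add (le_csSup hbdd ⟨s, hs, rfl⟩) (hmono s t hs.1 hs.2)
    · exact add_nonneg hM0 (hnonneg t ht)
  simp only [reflMap]
  linarith
end

section
/- Minimality of the reflection map: let φ be continuous on [0,∞), and suppose ψ, η are continuous with ψ non-negative, η(0) = 0, η non-decreasing, and ψ(t) = φ(t) + η(t) for all t ≥ 0. Then ψ(t) ≥ Γ(φ)(t) and η(t) ≥ sup_{s∈[0,t]} (−φ(s))⁺ for all t ≥ 0. -/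
open Set

/-- Minimality of the reflection map: if `ψ = φ + η` with `ψ ≥ 0`, `η(0) = 0` and `η`
non-decreasing, then `ψ ≥ Γ(φ)` and `η(t) ≥ sup_{s∈[0,t]} (−φ(s))⁺`. -/
theorem reflMap_minimality (φ ψ η : ℝ → ℝ)
    (hφ : Continuous φ) (hψ : Continuous ψ) (hη : Continuous η)
    (hψ0 : ∀ t : ℝ, 0 ≤ t → 0 ≤ ψ t)
    (hη0 : η 0 = 0)
    (hηmono : ∀ s t : ℝ, 0 ≤ s → s ≤ t → η s ≤ η t)
    (hdecomp : ∀ t : ℝ, 0 ≤ t → ψ t = φ t + η t) :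
    ∀ t : ℝ, 0 ≤ t →
      reflMap φ t ≤ ψ t ∧ sSup ((fun s => max (-φ s) 0) '' Icc 0 t) ≤ η t := by
  intro t ht
  have hηt : 0 ≤ η t := hη0 ▸ hηmono 0 t le_rfl ht
  have hsup : sSup ((fun s => max (-φ s) 0) '' Icc 0 t) ≤ η t := by
    apply Real.sSup_le _ hηt
    rintro x ⟨s, ⟨hs0, hst⟩, rfl⟩
    have h1 : -φ s = η s - ψ s := by have := hdecomp s hs0; linarith
    have h2 : -φ s ≤ η t := by
      have := hψ0 s hs0; have := hηmono s t hs0 hst; linarith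
    exact max_le h2 hηt
  refine ⟨?_, hsup⟩
  have := hdecomp t ht
  simp only [reflMap]
  linarith
end

section
/- Let u > 0, H ∈ (0,1), and let Z be a standard normal random variable. For the first time λ_m = inf{t > 0 : L₀(t) > b_m} with b_m = x + m and L₀(t) = sup_{s∈[0,t]}(u s − W_H(s)), every moment of λ_m is finite; more precisely, for β ≥ 1, E[λ_m^{2β}] ≤ (4^β/u^{2β})(x+m)^{2β} + E[(2|Z|/u)^{2β/(1−H)}] < ∞. -/
open Set Filter MeasureTheory ProbabilityTheory

lemma gauss_rpow_fin (u q : ℝ) (hu : 0 < u) (hq : 0 < q) :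
    ∫⁻ z, ENNReal.ofReal ((2 * |z| / u) ^ q) ∂(gaussianReal 0 1) < ⊤ := by
  have hcont : Continuous fun z : ℝ => (2 * |z| / u) ^ q :=
    ((continuous_const.mul continuous_abs).div_const u).rpow_const fun z => Or.inr hq.le
  have hg : Measurable fun z : ℝ => ENNReal.ofReal ((2 * |z| / u) ^ q) :=
    hcont.measurable.ennreal_ofReal
  rw [gaussianReal_of_var_ne_zero 0 one_ne_zero,
    lintegral_withDensity_eq_lintegral_mul _ (measurable_gaussianPDF 0 1) hg]
  have heq : ∀ z : ℝ, (gaussianPDF 0 1 * fun z => ENNReal.ofReal ((2 * |z| / u) ^ q)) z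
      = ENNReal.ofReal (gaussianPDFReal 0 1 z * (2 * |z| / u) ^ q) := by
    intro z
    simp only [Pi.mul_apply, gaussianPDF]
    rw [← ENNReal.ofReal_mul (gaussianPDFReal_nonneg 0 1 z)]
  simp_rw [heq]
  set G : ℝ → ℝ := fun z => |z| ^ q * Real.exp (-(2⁻¹ : ℝ) * z ^ 2) with hG
  have hf0 : Integrable (fun z : ℝ => z ^ q * Real.exp (-(2⁻¹ : ℝ) * z ^ 2)) :=
    integrable_rpow_mul_exp_neg_mul_sq (by norm_num) (by linarith)
  have hfneg : Integrable (fun z : ℝ => (-z) ^ q * Real.exp (-(2⁻¹ : ℝ) * z ^ 2)) := by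
    have h := hf0.comp_neg
    simpa [neg_sq] using h
  have hGint : Integrable G := by
    refine Integrable.mono' (hf0.abs.add hfneg.abs) ?_ (ae_of_all _ fun z => ?_)
    · exact ((continuous_abs.rpow_const fun z => Or.inr hq.le).mul
        (Real.continuous_exp.comp (by continuity))).aestronglyMeasurable
    · have hGnn : 0 ≤ G z := mul_nonneg (Real.rpow_nonneg (abs_nonneg z) q) (Real.exp_pos _).le
      rw [Real.norm_eq_abs, abs_of_nonneg hGnn]
      rcases le_or_gt 0 z with hz | hz
      · calc G z = z ^ q * Real.exp (-(2⁻¹ : ℝ) * z ^ 2) := by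
              rw [hG]; simp [abs_of_nonneg hz]
          _ ≤ |z ^ q * Real.exp (-(2⁻¹ : ℝ) * z ^ 2)| := le_abs_self _
          _ ≤ _ := le_add_of_nonneg_right (abs_nonneg _)
      · calc G z = (-z) ^ q * Real.exp (-(2⁻¹ : ℝ) * z ^ 2) := by
              rw [hG]; simp [abs_of_neg hz]
          _ ≤ |(-z) ^ q * Real.exp (-(2⁻¹ : ℝ) * z ^ 2)| := le_abs_self _
          _ ≤ _ := le_add_of_nonneg_left (abs_nonneg _)
  have hFeq : (fun z => gaussianPDFReal 0 1 z * (2 * |z| / u) ^ q)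
      = fun z => ((Real.sqrt (2 * Real.pi))⁻¹ * (2 / u) ^ q) * G z := by
    funext z
    simp only [gaussianPDFReal, NNReal.coe_one, mul_one, sub_zero]
    have harg : -z ^ 2 / 2 = -(2⁻¹ : ℝ) * z ^ 2 := by ring
    have h1 : 2 * |z| / u = 2 / u * |z| := by ring
    rw [harg, h1, Real.mul_rpow (by positivity) (abs_nonneg z), hG]
    ring
  have hFint : Integrable (fun z => gaussianPDFReal 0 1 z * (2 * |z| / u) ^ q) := by
    rw [hFeq]; exact hGint.const_mul _
  have hnn : 0 ≤ᵐ[volume] fun z => gaussianPDFReal 0 1 z * (2 * |z| / u) ^ q :=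
    ae_of_all _ fun z => mul_nonneg (gaussianPDFReal_nonneg 0 1 z)
      (Real.rpow_nonneg (by positivity) q)
  exact (hasFiniteIntegral_iff_ofReal hnn).mp hFint.hasFiniteIntegral

/-- Moments of the passage time `λ_m = inf{t > 0 : L₀(t) > x + m}` of the regulator
`L₀(t) = sup_{s∈[0,t]}(u s − W(s))` of an fBM-driven queue: for `β ≥ 1`,
`E[λ_m^{2β}] ≤ (4^β/u^{2β})(x+m)^{2β} + E[(2|Z|/u)^{2β/(1−H)}] < ∞`, with `Z` standard
normal. The fBM is encoded through continuous paths vanishing at `0` and the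
self-similarity property that `W(t)/t^H` is standard normal for each `t > 0`. -/
theorem passage_time_moments
    {Ω : Type*} [MeasurableSpace Ω] (P : Measure Ω) [IsProbabilityMeasure P]
    (H : ℝ) (hH : H ∈ Ioo (0:ℝ) 1)
    (W : ℝ → Ω → ℝ)
    (hWcont : ∀ ω, Continuous fun t => W t ω)
    (hW0 : ∀ ω, W 0 ω = 0)
    (hWmeas : ∀ t : ℝ, Measurable (W t))
    (hlaw : ∀ t : ℝ, 0 < t →
      P.map (fun ω => W t ω / t ^ H) = gaussianReal 0 1)
    (u x m : ℝ) (hu : 0 < u) (hx : 0 ≤ x) (hm : 0 ≤ m)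
    (L₀ : ℝ → Ω → ℝ)
    (hL₀ : ∀ t ω, L₀ t ω = sSup ((fun s => u * s - W s ω) '' Icc 0 t))
    (lam : Ω → ℝ)
    (hlam : ∀ ω, lam ω = sInf {t : ℝ | 0 < t ∧ x + m < L₀ t ω})
    (β : ℝ) (hβ : 1 ≤ β) :
    (∫⁻ ω, ENNReal.ofReal (lam ω ^ (2 * β)) ∂P)
      ≤ ENNReal.ofReal ((4:ℝ) ^ β / u ^ (2 * β) * (x + m) ^ (2 * β))
        + ∫⁻ z, ENNReal.ofReal ((2 * |z| / u) ^ (2 * β / (1 - H))) ∂(gaussianReal 0 1)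
    ∧ ENNReal.ofReal ((4:ℝ) ^ β / u ^ (2 * β) * (x + m) ^ (2 * β))
        + (∫⁻ z, ENNReal.ofReal ((2 * |z| / u) ^ (2 * β / (1 - H))) ∂(gaussianReal 0 1))
      < ⊤ := by
  classical
  obtain ⟨hH0, hH1⟩ := hH
  have h1H : 0 < 1 - H := by linarith
  have hβ0 : 0 < β := lt_of_lt_of_le one_pos hβ
  set b := x + m with hbdef
  have hbnn : 0 ≤ b := by positivity
  set p := 2 * β with hpdef
  have hp : 0 < p := by positivity
  -- basic path facts
  have hfc : ∀ ω, Continuous fun s => u * s - W s ω :=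
    fun ω => (continuous_const.mul continuous_id).sub (hWcont ω)
  have hbdd : ∀ ω t, BddAbove ((fun s => u * s - W s ω) '' Icc 0 t) :=
    fun ω t => (isCompact_Icc.image (hfc ω)).bddAbove
  have hmono : ∀ ω ⦃s t : ℝ⦄, 0 ≤ s → s ≤ t → L₀ s ω ≤ L₀ t ω := by
    intro ω s t hs hst
    rw [hL₀, hL₀]
    exact csSup_le_csSup (hbdd ω t) ((nonempty_Icc.mpr hs).image _)
      (image_mono (Icc_subset_Icc_right hst))
  have hle : ∀ ω t, 0 ≤ t → u * t - W t ω ≤ L₀ t ω := by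
    intro ω t ht
    rw [hL₀]
    exact le_csSup (hbdd ω t) (mem_image_of_mem _ (right_mem_Icc.mpr ht))
  have hSbdd : ∀ ω, BddBelow {t : ℝ | 0 < t ∧ b < L₀ t ω} :=
    fun ω => ⟨0, fun t ht => ht.1.le⟩
  have hlamnn : ∀ ω, 0 ≤ lam ω := fun ω => by
    rw [hlam]; exact Real.sInf_nonneg fun t ht => ht.1.le
  have hlt : ∀ ω t, 0 < t → t < lam ω → L₀ t ω ≤ b := by
    intro ω t ht hlt'
    by_contra hc
    push_neg at hc
    have : lam ω ≤ t := by rw [hlam]; exact csInf_le (hSbdd ω) ⟨ht, hc⟩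
    linarith
  -- measurability of level sets of L₀
  have hLmeas : ∀ t : ℝ, 0 ≤ t → MeasurableSet {ω | b < L₀ t ω} := by
    intro t ht
    set D : Set ℝ := insert t (Icc 0 t ∩ Set.range ((↑) : ℚ → ℝ)) with hD
    have hDsub : D ⊆ Icc 0 t := by
      rintro s (rfl | ⟨hs, _⟩)
      · exact right_mem_Icc.mpr ht
      · exact hs
    have hDcnt : D.Countable :=
      ((Set.countable_range _).mono inter_subset_right).insert t
    have hdense : Icc 0 t ⊆ closure D := by
      intro s hs
      rcases eq_or_lt_of_le hs.2 with h | h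
      · exact subset_closure (h ▸ mem_insert _ _)
      · rcases eq_or_lt_of_le hs.1 with h0 | h0
        · exact subset_closure (mem_insert_of_mem _ ⟨hs, 0, by rw [Rat.cast_zero]; exact h0⟩)
        · have hmem : s ∈ closure (Ioo 0 t ∩ Set.range ((↑) : ℚ → ℝ)) :=
            Rat.denseRange_cast.open_subset_closure_inter isOpen_Ioo ⟨h0, h⟩
          refine closure_mono ?_ hmem
          exact fun y hy => mem_insert_of_mem _ ⟨Ioo_subset_Icc_self hy.1, hy.2⟩
    have hkey : ∀ ω, b < L₀ t ω ↔ ∃ s ∈ D, b < u * s - W s ω := by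
      intro ω
      constructor
      · intro hω
        by_contra hc
        push_neg at hc
        have hLb : L₀ t ω ≤ b := by
          rw [hL₀]
          refine csSup_le ((nonempty_Icc.mpr ht).image _) ?_
          rintro y ⟨s, hs, rfl⟩
          have h1 : (fun s => u * s - W s ω) s ∈ closure ((fun s => u * s - W s ω) '' D) :=
            image_closure_subset_closure_image (hfc ω) ⟨s, hdense hs, rfl⟩
          have h2 : closure ((fun s => u * s - W s ω) '' D) ⊆ Iic b := by
            refine closure_minimal ?_ isClosed_Iic
            rintro y ⟨s', hs', rfl⟩
            exact hc s' hs'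
          exact h2 h1
        linarith
      · rintro ⟨s, hsD, hs⟩
        have h1 : u * s - W s ω ≤ L₀ t ω := by
          rw [hL₀]; exact le_csSup (hbdd ω t) (mem_image_of_mem _ (hDsub hsD))
        linarith
    have hset : {ω | b < L₀ t ω} = ⋃ s ∈ D, {ω | W s ω < u * s - b} := by
      ext ω
      simp only [mem_setOf_eq, mem_iUnion, exists_prop]
      rw [hkey ω]
      constructor <;> rintro ⟨s, h1, h2⟩ <;> exact ⟨s, h1, by linarith⟩
    rw [hset]
    exact MeasurableSet.biUnion hDcnt fun s _ => (hWmeas s) measurableSet_Iio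
  -- measurability of `lam`
  have hlam_meas : Measurable lam := by
    apply measurable_of_Iio
    intro y
    have hset : lam ⁻¹' Iio y =
        (⋃ (q : ℚ), {ω | 0 < (q : ℝ) ∧ (q : ℝ) < y ∧ b < L₀ q ω}) ∪
        {ω | 0 < y ∧ ∀ q : ℚ, 0 < (q : ℝ) → L₀ q ω ≤ b} := by
      ext ω
      simp only [mem_preimage, mem_Iio, mem_union, mem_iUnion, mem_setOf_eq]
      constructor
      · intro hy
        by_cases hne : {t : ℝ | 0 < t ∧ b < L₀ t ω}.Nonempty
        · left
          rw [hlam] at hy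
          obtain ⟨s, hsmem, hsy⟩ := (csInf_lt_iff (hSbdd ω) hne).mp hy
          obtain ⟨q, hq1, hq2⟩ := exists_rat_btwn hsy
          exact ⟨q, lt_trans hsmem.1 hq1, hq2,
            lt_of_lt_of_le hsmem.2 (hmono ω hsmem.1.le hq1.le)⟩
        · right
          rw [not_nonempty_iff_eq_empty] at hne
          have hl0 : lam ω = 0 := by rw [hlam, hne, Real.sInf_empty]
          refine ⟨by rw [hl0] at hy; exact hy, fun q hq => ?_⟩
          by_contra hc
          push_neg at hc
          have : (q : ℝ) ∈ {t : ℝ | 0 < t ∧ b < L₀ t ω} := ⟨hq, hc⟩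
          rw [hne] at this
          exact this
      · rintro (⟨q, hq0, hqy, hqL⟩ | ⟨hy0, hall⟩)
        · calc lam ω ≤ (q : ℝ) := by rw [hlam]; exact csInf_le (hSbdd ω) ⟨hq0, hqL⟩
            _ < y := hqy
        · have hne : {t : ℝ | 0 < t ∧ b < L₀ t ω} = ∅ := by
            ext s
            simp only [mem_setOf_eq, mem_empty_iff_false, iff_false, not_and, not_lt]
            intro hs0
            obtain ⟨q, hq⟩ := exists_rat_gt s
            exact le_trans (hmono ω hs0.le hq.le) (hall q (lt_trans hs0 hq))
          rw [hlam, hne, Real.sInf_empty]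
          exact hy0
    rw [hset]
    refine MeasurableSet.union ?_ ?_
    · refine MeasurableSet.iUnion fun q => ?_
      by_cases hq0 : 0 < (q : ℝ)
      · by_cases hqy : (q : ℝ) < y
        · have hmq := hLmeas q hq0.le
          have hseq : {ω : Ω | 0 < (q : ℝ) ∧ (q : ℝ) < y ∧ b < L₀ q ω}
              = {ω | b < L₀ (q : ℝ) ω} := by
            ext ω; simp [hq0, hqy]
          rw [hseq]; exact hmq
        · have hseq : {ω : Ω | 0 < (q : ℝ) ∧ (q : ℝ) < y ∧ b < L₀ q ω} = ∅ := by
            ext ω; simp [hqy]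
          rw [hseq]; exact MeasurableSet.empty
      · have hseq : {ω : Ω | 0 < (q : ℝ) ∧ (q : ℝ) < y ∧ b < L₀ q ω} = ∅ := by
          ext ω; simp [hq0]
        rw [hseq]; exact MeasurableSet.empty
    · by_cases hy0 : 0 < y
      · have hseq : {ω : Ω | 0 < y ∧ ∀ q : ℚ, 0 < (q : ℝ) → L₀ q ω ≤ b}
            = ⋂ (q : ℚ), {ω | 0 < (q : ℝ) → L₀ q ω ≤ b} := by
          ext ω; simp [hy0]
        rw [hseq]
        refine MeasurableSet.iInter fun q => ?_
        by_cases hq0 : 0 < (q : ℝ)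
        · have hseq2 : {ω : Ω | 0 < (q : ℝ) → L₀ (q : ℝ) ω ≤ b}
              = {ω | b < L₀ (q : ℝ) ω}ᶜ := by
            ext ω
            simp only [mem_setOf_eq, mem_compl_iff, not_lt]
            exact ⟨fun h => h hq0, fun h _ => h⟩
          rw [hseq2]; exact (hLmeas q hq0.le).compl
        · have hseq2 : {ω : Ω | 0 < (q : ℝ) → L₀ (q : ℝ) ω ≤ b} = univ := by
            ext ω; simp [hq0]
          rw [hseq2]; exact MeasurableSet.univ
      · have hseq : {ω : Ω | 0 < y ∧ ∀ q : ℚ, 0 < (q : ℝ) → L₀ q ω ≤ b} = ∅ := by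
          ext ω; simp [hy0]
        rw [hseq]; exact MeasurableSet.empty
  -- the tail bound
  have htail : ∀ t : ℝ, 2 * b / u < t →
      P {a | t < lam a} ≤ (gaussianReal 0 1) {z | t ≤ (2 * |z| / u) ^ (1 / (1 - H))} := by
    intro t hTt
    have ht0 : 0 < t := lt_of_le_of_lt (by positivity) hTt
    have hbut : b < u * t / 2 := by
      rw [div_lt_iff₀ hu] at hTt
      linarith
    have htH : (0 : ℝ) < t ^ H := Real.rpow_pos_of_pos ht0 H
    have hsub : {a | t < lam a} ⊆ (fun a => W t a / t ^ H) ⁻¹' Ici ((u * t - b) / t ^ H) := by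
      intro a ha
      have h1 : L₀ t a ≤ b := hlt a t ht0 ha
      have h2 : u * t - W t a ≤ L₀ t a := hle a t ht0.le
      have h3 : u * t - b ≤ W t a := by linarith
      simp only [mem_preimage, mem_Ici]
      gcongr
    calc P {a | t < lam a}
        ≤ P ((fun a => W t a / t ^ H) ⁻¹' Ici ((u * t - b) / t ^ H)) := measure_mono hsub
      _ = (P.map (fun a => W t a / t ^ H)) (Ici ((u * t - b) / t ^ H)) :=
          (Measure.map_apply ((hWmeas t).div_const _) measurableSet_Ici).symm
      _ = (gaussianReal 0 1) (Ici ((u * t - b) / t ^ H)) := by rw [hlaw t ht0]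
      _ ≤ (gaussianReal 0 1) {z | t ≤ (2 * |z| / u) ^ (1 / (1 - H))} := by
          refine measure_mono ?_
          intro z hz
          rw [mem_Ici] at hz
          have hc0 : 0 < (u * t - b) / t ^ H := div_pos (by linarith) htH
          have hz0 : 0 < z := lt_of_lt_of_le hc0 hz
          have h3 : u * t - b ≤ z * t ^ H := (div_le_iff₀ htH).mp hz
          have h2z : t ^ (1 - H) ≤ 2 * |z| / u := by
            rw [abs_of_pos hz0, Real.rpow_sub ht0, Real.rpow_one, div_le_div_iff₀ htH hu]
            nlinarith
          have hone : (1 - H) * (1 / (1 - H)) = 1 := by field_simp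
          show t ≤ (2 * |z| / u) ^ (1 / (1 - H))
          calc t = t ^ ((1 - H) * (1 / (1 - H))) := by rw [hone, Real.rpow_one]
            _ = (t ^ (1 - H)) ^ (1 / (1 - H)) := Real.rpow_mul ht0.le _ _
            _ ≤ (2 * |z| / u) ^ (1 / (1 - H)) :=
                Real.rpow_le_rpow (Real.rpow_nonneg ht0.le _) h2z (by positivity)
  -- layer cake representations
  have hg_nn : ∀ z : ℝ, 0 ≤ (2 * |z| / u) ^ (1 / (1 - H)) :=
    fun z => Real.rpow_nonneg (by positivity) _
  have hg_meas : Measurable fun z : ℝ => (2 * |z| / u) ^ (1 / (1 - H)) :=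
    (((continuous_const.mul continuous_abs).div_const u).rpow_const
      fun z => Or.inr (by positivity)).measurable
  have layer1 := lintegral_rpow_eq_lintegral_meas_lt_mul P (ae_of_all _ hlamnn)
    hlam_meas.aemeasurable hp
  have layer2 := lintegral_rpow_eq_lintegral_meas_le_mul (gaussianReal 0 1)
    (ae_of_all _ hg_nn) hg_meas.aemeasurable hp
  have hgp : ∀ z : ℝ, ((2 * |z| / u) ^ (1 / (1 - H))) ^ p = (2 * |z| / u) ^ (2 * β / (1 - H)) := by
    intro z
    rw [← Real.rpow_mul (by positivity)]
    congr 1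
    rw [hpdef]
    ring
  set T := 2 * b / u with hTdef
  have hT0 : 0 ≤ T := by positivity
  -- value of the first piece
  have hint : IntegrableOn (fun t : ℝ => t ^ (p - 1)) (Ioc 0 T) volume :=
    (intervalIntegral.intervalIntegrable_rpow' (by linarith : (-1 : ℝ) < p - 1)).1
  have hnn1 : 0 ≤ᵐ[volume.restrict (Ioc 0 T)] fun t : ℝ => t ^ (p - 1) :=
    (ae_restrict_iff' measurableSet_Ioc).mpr (ae_of_all _ fun t ht => Real.rpow_nonneg ht.1.le _)
  have hval : ∫ t in Ioc 0 T, t ^ (p - 1) = T ^ p / p := by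
    rw [← intervalIntegral.integral_of_le hT0,
      integral_rpow (Or.inl (by linarith : (-1 : ℝ) < p - 1))]
    have hpe : p - 1 + 1 = p := by ring
    rw [hpe, Real.zero_rpow hp.ne', sub_zero]
  have h4 : ((2:ℝ)) ^ p = (4:ℝ) ^ β := by
    rw [hpdef, Real.rpow_mul (by norm_num : (0:ℝ) ≤ 2)]
    norm_num
  have hTp : T ^ p = (4:ℝ) ^ β / u ^ p * b ^ p := by
    rw [hTdef, Real.div_rpow (by positivity) hu.le,
      Real.mul_rpow (by norm_num) hbnn, h4]
    ring
  have part1 : ENNReal.ofReal p * ∫⁻ t in Ioc 0 T, P {a | t < lam a} * ENNReal.ofReal (t ^ (p - 1))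
      ≤ ENNReal.ofReal ((4:ℝ) ^ β / u ^ p * b ^ p) := by
    calc ENNReal.ofReal p * ∫⁻ t in Ioc 0 T, P {a | t < lam a} * ENNReal.ofReal (t ^ (p - 1))
        ≤ ENNReal.ofReal p * ∫⁻ t in Ioc 0 T, ENNReal.ofReal (t ^ (p - 1)) := by
          refine mul_le_mul_right (lintegral_mono fun t => ?_) _
          calc P {a | t < lam a} * ENNReal.ofReal (t ^ (p - 1))
              ≤ 1 * ENNReal.ofReal (t ^ (p - 1)) := mul_le_mul_left prob_le_one _
            _ = ENNReal.ofReal (t ^ (p - 1)) := one_mul _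
      _ = ENNReal.ofReal p * ENNReal.ofReal (∫ t in Ioc 0 T, t ^ (p - 1)) := by
          rw [← ofReal_integral_eq_lintegral_ofReal hint hnn1]
      _ = ENNReal.ofReal p * ENNReal.ofReal (T ^ p / p) := by rw [hval]
      _ = ENNReal.ofReal (T ^ p) := by
          rw [← ENNReal.ofReal_mul hp.le, mul_div_cancel₀ _ hp.ne']
      _ = ENNReal.ofReal ((4:ℝ) ^ β / u ^ p * b ^ p) := by rw [hTp]
  have part2 : ENNReal.ofReal p * ∫⁻ t in Ioi T, P {a | t < lam a} * ENNReal.ofReal (t ^ (p - 1))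
      ≤ ∫⁻ z, ENNReal.ofReal ((2 * |z| / u) ^ (2 * β / (1 - H))) ∂(gaussianReal 0 1) := by
    calc ENNReal.ofReal p * ∫⁻ t in Ioi T, P {a | t < lam a} * ENNReal.ofReal (t ^ (p - 1))
        ≤ ENNReal.ofReal p * ∫⁻ t in Ioi T,
            (gaussianReal 0 1) {z | t ≤ (2 * |z| / u) ^ (1 / (1 - H))}
              * ENNReal.ofReal (t ^ (p - 1)) := by
          refine mul_le_mul_right (lintegral_mono_ae ?_) _
          refine (ae_restrict_iff' measurableSet_Ioi).mpr (ae_of_all _ fun t ht => ?_)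
          exact mul_le_mul_left (htail t ht) _
      _ ≤ ENNReal.ofReal p * ∫⁻ t in Ioi 0,
            (gaussianReal 0 1) {z | t ≤ (2 * |z| / u) ^ (1 / (1 - H))}
              * ENNReal.ofReal (t ^ (p - 1)) :=
          mul_le_mul_right (lintegral_mono_set (Ioi_subset_Ioi hT0)) _
      _ = ∫⁻ z, ENNReal.ofReal (((2 * |z| / u) ^ (1 / (1 - H))) ^ p) ∂(gaussianReal 0 1) :=
          layer2.symm
      _ = ∫⁻ z, ENNReal.ofReal ((2 * |z| / u) ^ (2 * β / (1 - H))) ∂(gaussianReal 0 1) :=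
          lintegral_congr fun z => by rw [hgp z]
  constructor
  · calc ∫⁻ ω, ENNReal.ofReal (lam ω ^ p) ∂P
        = ENNReal.ofReal p * ∫⁻ t in Ioi 0, P {a | t < lam a} * ENNReal.ofReal (t ^ (p - 1)) :=
          layer1
      _ = ENNReal.ofReal p *
          ∫⁻ t in Ioc 0 T ∪ Ioi T, P {a | t < lam a} * ENNReal.ofReal (t ^ (p - 1)) := by
          rw [Ioc_union_Ioi_eq_Ioi hT0]
      _ = ENNReal.ofReal p *
          ((∫⁻ t in Ioc 0 T, P {a | t < lam a} * ENNReal.ofReal (t ^ (p - 1)))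
            + ∫⁻ t in Ioi T, P {a | t < lam a} * ENNReal.ofReal (t ^ (p - 1))) := by
          rw [lintegral_union measurableSet_Ioi Ioc_disjoint_Ioi_same]
      _ = ENNReal.ofReal p * (∫⁻ t in Ioc 0 T, P {a | t < lam a} * ENNReal.ofReal (t ^ (p - 1)))
            + ENNReal.ofReal p *
              ∫⁻ t in Ioi T, P {a | t < lam a} * ENNReal.ofReal (t ^ (p - 1)) := by
          rw [mul_add]
      _ ≤ ENNReal.ofReal ((4:ℝ) ^ β / u ^ p * b ^ p)
            + ∫⁻ z, ENNReal.ofReal ((2 * |z| / u) ^ (2 * β / (1 - H))) ∂(gaussianReal 0 1) :=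
          add_le_add part1 part2
  · refine ENNReal.add_lt_top.mpr ⟨ENNReal.ofReal_lt_top, ?_⟩
    exact gauss_rpow_fin u (2 * β / (1 - H)) hu (div_pos (by linarith) h1H)
end

section
/- Suppose P(Z_u ≥ m) ≤ exp(−c m^{2(1−H)}) for all large m (some c > 0, H ∈ (1/2,1)) and E[λ_{m+1}^{2β}] ≤ A (x+m+1)^{2β} + B for constants A, B. Then the coupling time τ₀ (equal to λ_{Z} where Z is an independent copy-like random level with the tail bound above) satisfies E[τ₀^β] ≤ Σ_{m=0}^∞ [E(λ_{m+1}^{2β}) P(Z ≥ m)]^{1/2} < ∞ for every β ≥ 1. -/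
open Set Filter MeasureTheory
open scoped ENNReal

lemma my_summable_of_eventually_le {u w : ℕ → ℝ} (hu : ∀ n, 0 ≤ u n) (N : ℕ)
    (h : ∀ n, N ≤ n → u n ≤ w n) (hw : Summable w) : Summable u := by
  rw [← summable_nat_add_iff N]
  exact Summable.of_nonneg_of_le (fun n => hu _) (fun n => h _ (Nat.le_add_left _ _))
    ((summable_nat_add_iff N).2 hw)

lemma my_tendsto_poly_exp (s a b : ℝ) (ha : 0 < a) (hb : 0 < b) :
    Tendsto (fun m : ℕ => (m : ℝ) ^ s * Real.exp (-a * (m : ℝ) ^ b)) atTop (nhds 0) := by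
  have h1 := tendsto_rpow_mul_exp_neg_mul_atTop_nhds_zero (s / b) a ha
  have h2 : Tendsto (fun m : ℕ => (m : ℝ) ^ b) atTop atTop :=
    (tendsto_rpow_atTop hb).comp tendsto_natCast_atTop_atTop
  refine (h1.comp h2).congr' ?_
  filter_upwards [eventually_ge_atTop 1] with m hm
  have hm0 : (0 : ℝ) ≤ (m : ℝ) := Nat.cast_nonneg m
  simp only [Function.comp_apply]
  rw [← Real.rpow_mul hm0, mul_comm b, div_mul_cancel₀ _ hb.ne']

/-- summability of `polynomial × stretched exponential` sequences. -/
lemma my_summable_poly_exp (s a b : ℝ) (ha : 0 < a) (hb : 0 < b) :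
    Summable (fun m : ℕ => (m : ℝ) ^ s * Real.exp (-a * (m : ℝ) ^ b)) := by
  have hten : Tendsto (fun m : ℕ => (m : ℝ) ^ (s + 2) * Real.exp (-a * (m : ℝ) ^ b))
      atTop (nhds 0) := my_tendsto_poly_exp (s + 2) a b ha hb
  have hev : ∀ᶠ m : ℕ in atTop,
      (m : ℝ) ^ s * Real.exp (-a * (m : ℝ) ^ b) ≤ (m : ℝ) ^ (-2 : ℝ) := by
    filter_upwards [eventually_ge_atTop 1, hten.eventually_le_const one_pos] with m hm1 hm2
    have hmpos : (0 : ℝ) < (m : ℝ) := by exact_mod_cast Nat.pos_of_ne_zero (by omega)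
    have key : (m : ℝ) ^ s * Real.exp (-a * (m : ℝ) ^ b)
        = ((m : ℝ) ^ (s + 2) * Real.exp (-a * (m : ℝ) ^ b)) * (m : ℝ) ^ (-2 : ℝ) := by
      rw [mul_right_comm, ← Real.rpow_add hmpos]
      ring_nf
    rw [key]
    calc ((m : ℝ) ^ (s + 2) * Real.exp (-a * (m : ℝ) ^ b)) * (m : ℝ) ^ (-2 : ℝ)
        ≤ 1 * (m : ℝ) ^ (-2 : ℝ) :=
          mul_le_mul_of_nonneg_right hm2 (Real.rpow_nonneg hmpos.le _)
      _ = (m : ℝ) ^ (-2 : ℝ) := one_mul _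
  obtain ⟨N, hN⟩ := eventually_atTop.1 hev
  refine my_summable_of_eventually_le (fun n => ?_) N hN ?_
  · exact mul_nonneg (Real.rpow_nonneg (Nat.cast_nonneg n) _) (Real.exp_pos _).le
  · exact Real.summable_nat_rpow.2 (by norm_num)

/-- Finiteness of the moments of the coupling time `τ₀ = λ_Z`: if the random level `Z ≥ 0`
has a stretched-exponential tail, `y ↦ λ_y` is non-negative and non-decreasing, and the
moments `E[λ_{m+1}^{2β}]` grow at most polynomially, then
`E[τ₀^β] ≤ Σ_m [E(λ_{m+1}^{2β}) P(Z ≥ m)]^{1/2} < ∞` for every `β ≥ 1`. -/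
theorem coupling_time_moment_bound
    {Ω : Type*} [MeasurableSpace Ω] (P : Measure Ω) [IsProbabilityMeasure P]
    (H c A B x : ℝ) (hH : H ∈ Ioo (1/2 : ℝ) 1) (hc : 0 < c)
    (hA : 0 ≤ A) (hB : 0 ≤ B) (hx : 0 ≤ x)
    (lam : ℝ → Ω → ℝ)
    (hlam_nonneg : ∀ y ω, 0 ≤ lam y ω)
    (hlam_mono : ∀ ω, Monotone fun y => lam y ω)
    (hlam_meas : ∀ y : ℝ, Measurable (lam y))
    (Z : Ω → ℝ) (hZmeas : Measurable Z) (hZnonneg : ∀ ω, 0 ≤ Z ω)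
    (M : ℕ)
    (htail : ∀ m : ℕ, M ≤ m →
      P {ω | (m : ℝ) ≤ Z ω} ≤ ENNReal.ofReal (Real.exp (-c * (m : ℝ) ^ (2 * (1 - H)))))
    (β : ℝ) (hβ : 1 ≤ β)
    (hmom : ∀ m : ℕ,
      (∫⁻ ω, ENNReal.ofReal (lam ((m : ℝ) + 1) ω ^ (2 * β)) ∂P)
        ≤ ENNReal.ofReal (A * (x + (m : ℝ) + 1) ^ (2 * β) + B))
    (tau : Ω → ℝ) (htau : ∀ ω, tau ω = lam (Z ω) ω) (htaumeas : Measurable tau) :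
    (∫⁻ ω, ENNReal.ofReal (tau ω ^ β) ∂P)
      ≤ (∑' m : ℕ,
          ((∫⁻ ω, ENNReal.ofReal (lam ((m : ℝ) + 1) ω ^ (2 * β)) ∂P)
            * P {ω | (m : ℝ) ≤ Z ω}) ^ (1/2 : ℝ))
    ∧ (∑' m : ℕ,
          ((∫⁻ ω, ENNReal.ofReal (lam ((m : ℝ) + 1) ω ^ (2 * β)) ∂P)
            * P {ω | (m : ℝ) ≤ Z ω}) ^ (1/2 : ℝ)) < ⊤ := by
  have hβ0 : (0 : ℝ) ≤ β := by linarith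
  have h2β : (0 : ℝ) ≤ 2 * β := by linarith
  set αe : ℝ := 2 * (1 - H) with hαe_def
  have hαe : 0 < αe := by
    have := hH.2; simp only [hαe_def]; nlinarith
  set I : ℕ → ℝ≥0∞ := fun m => ∫⁻ ω, ENNReal.ofReal (lam ((m : ℝ) + 1) ω ^ (2 * β)) ∂P with hI
  set Pm : ℕ → ℝ≥0∞ := fun m => P {ω | (m : ℝ) ≤ Z ω} with hPm
  set T : ℕ → ℝ≥0∞ := fun m => (I m * Pm m) ^ (1/2 : ℝ) with hT
  -- the partition sets
  set S : ℕ → Set Ω := fun m => Z ⁻¹' (Ico (m : ℝ) ((m : ℝ) + 1)) with hS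
  have hSmeas : ∀ m, MeasurableSet (S m) := fun m => hZmeas measurableSet_Ico
  have hSdisj : Pairwise (Function.onFun Disjoint S) := by
    intro m n hmn
    refine Set.disjoint_left.2 fun ω hm hn => ?_
    simp only [hS, mem_preimage, mem_Ico] at hm hn
    rcases lt_or_gt_of_ne hmn with h | h
    · have : (m : ℝ) + 1 ≤ (n : ℝ) := by exact_mod_cast Nat.succ_le_of_lt h
      linarith [hm.2, hn.1]
    · have : (n : ℝ) + 1 ≤ (m : ℝ) := by exact_mod_cast Nat.succ_le_of_lt h
      linarith [hn.2, hm.1]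
  have hSunion : (⋃ m, S m) = univ := by
    refine eq_univ_of_forall fun ω => ?_
    refine mem_iUnion.2 ⟨⌊Z ω⌋₊, ?_⟩
    simp only [hS, mem_preimage, mem_Ico]
    exact ⟨Nat.floor_le (hZnonneg ω), Nat.lt_floor_add_one _⟩
  -- key per-term bound
  have hterm : ∀ m : ℕ, (∫⁻ ω in S m, ENNReal.ofReal (tau ω ^ β) ∂P) ≤ T m := by
    intro m
    set F : Ω → ℝ≥0∞ := fun ω => ENNReal.ofReal (lam ((m : ℝ) + 1) ω ^ β) with hF
    set G : Ω → ℝ≥0∞ := (S m).indicator 1 with hG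
    have hFmeas : Measurable F := by
      apply Measurable.ennreal_ofReal
      exact (Real.continuous_rpow_const hβ0).measurable.comp (hlam_meas _)
    have hGmeas : Measurable G := measurable_one.indicator (hSmeas m)
    have step1 : (∫⁻ ω in S m, ENNReal.ofReal (tau ω ^ β) ∂P) ≤ ∫⁻ ω in S m, F ω ∂P := by
      refine setLIntegral_mono hFmeas fun ω hω => ?_
      simp only [hS, mem_preimage, mem_Ico] at hω
      apply ENNReal.ofReal_le_ofReal
      rw [htau ω]
      exact Real.rpow_le_rpow (hlam_nonneg _ _) (hlam_mono ω hω.2.le) hβ0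
    have step2 : (∫⁻ ω in S m, F ω ∂P) = ∫⁻ ω, (F * G) ω ∂P := by
      rw [← lintegral_indicator (hSmeas m)]
      congr 1
      funext ω
      simp only [hG, Pi.mul_apply, Set.indicator_apply]
      by_cases h : ω ∈ S m <;> simp [h]
    have hconj : (2 : ℝ).HolderConjugate 2 := by
      constructor <;> norm_num
    have step3 : (∫⁻ ω, (F * G) ω ∂P)
        ≤ (∫⁻ ω, F ω ^ (2:ℝ) ∂P) ^ (1/2 : ℝ) * (∫⁻ ω, G ω ^ (2:ℝ) ∂P) ^ (1/2 : ℝ) :=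
      ENNReal.lintegral_mul_le_Lp_mul_Lq P hconj hFmeas.aemeasurable hGmeas.aemeasurable
    have hF2 : (∫⁻ ω, F ω ^ (2:ℝ) ∂P) = I m := by
      simp only [hI]
      congr 1
      funext ω
      rw [hF, ENNReal.ofReal_rpow_of_nonneg (Real.rpow_nonneg (hlam_nonneg _ _) _) (by norm_num),
        ← Real.rpow_mul (hlam_nonneg _ _)]
      norm_num [mul_comm]
    have hG2 : (∫⁻ ω, G ω ^ (2:ℝ) ∂P) = P (S m) := by
      have : (fun ω => G ω ^ (2:ℝ)) = G := by
        funext ω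
        simp only [hG, Set.indicator_apply]
        by_cases h : ω ∈ S m <;>
          simp [h, ENNReal.zero_rpow_of_pos (by norm_num : (0:ℝ) < 2)]
      rw [this, hG, lintegral_indicator_one (hSmeas m)]
    have hPS : P (S m) ≤ Pm m := by
      apply measure_mono
      intro ω hω
      simp only [hS, mem_preimage, mem_Ico] at hω
      exact hω.1
    calc (∫⁻ ω in S m, ENNReal.ofReal (tau ω ^ β) ∂P)
        ≤ ∫⁻ ω, (F * G) ω ∂P := step1.trans_eq step2
      _ ≤ (I m) ^ (1/2 : ℝ) * (P (S m)) ^ (1/2 : ℝ) := by rw [← hF2, ← hG2]; exact step3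
      _ ≤ (I m) ^ (1/2 : ℝ) * (Pm m) ^ (1/2 : ℝ) :=
          mul_le_mul_right (ENNReal.rpow_le_rpow hPS (by norm_num)) _
      _ = T m := (ENNReal.mul_rpow_of_nonneg _ _ (by norm_num : (0:ℝ) ≤ 1/2)).symm
  -- first conjunct
  have hfirst : (∫⁻ ω, ENNReal.ofReal (tau ω ^ β) ∂P) ≤ ∑' m, T m := by
    have : (∫⁻ ω, ENNReal.ofReal (tau ω ^ β) ∂P)
        = ∑' m, ∫⁻ ω in S m, ENNReal.ofReal (tau ω ^ β) ∂P := by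
      rw [← lintegral_iUnion hSmeas hSdisj, hSunion, Measure.restrict_univ]
    rw [this]
    exact ENNReal.tsum_le_tsum hterm
  -- second conjunct: finiteness
  set Q : ℕ → ℝ := fun m => A * (x + (m : ℝ) + 1) ^ (2 * β) + B with hQ
  have hQ0 : ∀ m, 0 ≤ Q m := fun m =>
    add_nonneg (mul_nonneg hA (Real.rpow_nonneg (by positivity) _)) hB
  set e : ℕ → ℝ := fun m => if m < M then 1 else Real.exp (-c * (m : ℝ) ^ αe) with he
  have he0 : ∀ m, 0 ≤ e m := by
    intro m; simp only [he]; split <;> [norm_num; exact (Real.exp_pos _).le]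
  set u : ℕ → ℝ := fun m => (Q m * e m) ^ (1/2 : ℝ) with hu
  have hu0 : ∀ m, 0 ≤ u m := fun m => Real.rpow_nonneg (mul_nonneg (hQ0 m) (he0 m)) _
  have hPmle : ∀ m, Pm m ≤ ENNReal.ofReal (e m) := by
    intro m
    simp only [he, hPm]
    split
    · rw [ENNReal.ofReal_one]; exact prob_le_one
    · exact htail m (by omega)
  have hTle : ∀ m, T m ≤ ENNReal.ofReal (u m) := by
    intro m
    rw [hT, hu, ← ENNReal.ofReal_rpow_of_nonneg (mul_nonneg (hQ0 m) (he0 m)) (by norm_num),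
      ENNReal.ofReal_mul (hQ0 m)]
    exact ENNReal.rpow_le_rpow (mul_le_mul' (hmom m) (hPmle m)) (by norm_num)
  have husum : Summable u := by
    set C₀ : ℝ := A * (x + 2) ^ (2 * β) + B with hC₀
    have hC₀0 : 0 ≤ C₀ := add_nonneg (mul_nonneg hA (Real.rpow_nonneg (by linarith) _)) hB
    set C : ℝ := C₀ ^ (1/2 : ℝ) with hC
    have hC0 : 0 ≤ C := Real.rpow_nonneg hC₀0 _
    refine my_summable_of_eventually_le hu0 (max M 1) (fun m hm => ?_)
      ((my_summable_poly_exp β (c/2) αe (half_pos hc) hαe).mul_left C)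
    have hmM : M ≤ m := le_trans (le_max_left _ _) hm
    have hm1 : (1 : ℝ) ≤ (m : ℝ) := by
      have : 1 ≤ m := le_trans (le_max_right _ _) hm
      exact_mod_cast this
    have hm0 : (0 : ℝ) ≤ (m : ℝ) := by linarith
    have hem : e m = Real.exp (-c * (m : ℝ) ^ αe) := by simp only [he]; rw [if_neg (by omega)]
    -- Q m ≤ C₀ * m ^ (2β)
    have hQle : Q m ≤ C₀ * (m : ℝ) ^ (2 * β) := by
      have h1 : x + (m : ℝ) + 1 ≤ (x + 2) * (m : ℝ) := by nlinarith
      have h2 : (x + (m : ℝ) + 1) ^ (2 * β) ≤ ((x + 2) * (m : ℝ)) ^ (2 * β) :=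
        Real.rpow_le_rpow (by positivity) h1 h2β
      have h3 : ((x + 2) * (m : ℝ)) ^ (2 * β) = (x + 2) ^ (2 * β) * (m : ℝ) ^ (2 * β) :=
        Real.mul_rpow (by linarith) hm0
      have h4 : (1 : ℝ) ≤ (m : ℝ) ^ (2 * β) := Real.one_le_rpow hm1 h2β
      have h5 : 0 ≤ (x + 2) ^ (2 * β) := Real.rpow_nonneg (by linarith) _
      simp only [hQ, hC₀]
      nlinarith [mul_le_mul_of_nonneg_left h2 hA, Real.rpow_nonneg hm0 (2*β)]
    have key : u m ≤ C * ((m : ℝ) ^ β * Real.exp (-(c/2) * (m : ℝ) ^ αe)) := by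
      have hb1 : Q m * e m ≤ C₀ * (m : ℝ) ^ (2 * β) * Real.exp (-c * (m : ℝ) ^ αe) := by
        rw [hem]
        exact mul_le_mul_of_nonneg_right hQle (Real.exp_pos _).le
      have hb2 : u m ≤ (C₀ * (m : ℝ) ^ (2 * β) * Real.exp (-c * (m : ℝ) ^ αe)) ^ (1/2 : ℝ) :=
        Real.rpow_le_rpow (mul_nonneg (hQ0 m) (he0 m)) hb1 (by norm_num)
      refine hb2.trans (le_of_eq ?_)
      rw [Real.mul_rpow (mul_nonneg hC₀0 (Real.rpow_nonneg hm0 _)) (Real.exp_pos _).le,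
        Real.mul_rpow hC₀0 (Real.rpow_nonneg hm0 _),
        ← Real.rpow_mul hm0, ← Real.exp_mul]
      simp only [hC, hC₀]
      ring_nf
    refine key.trans (le_of_eq (by ring))
  -- conclude
  have hsum_le : (∑' m, T m) ≤ ENNReal.ofReal (∑' m, u m) := by
    rw [ENNReal.ofReal_tsum_of_nonneg hu0 husum]
    exact ENNReal.tsum_le_tsum hTle
  exact ⟨hfirst, lt_of_le_of_lt hsum_le ENNReal.ofReal_lt_top⟩
end
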